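/- arXiv:1712.00965 — 2 statements merged into one kernel-verified Lean document; each statement's English description precedes it below -/
import Mathlib

section
/- Let ζ_i, ζ_j > 0, b_i(0), b_j(0) > 0, α ≥ 0, b_i(t) = b_i(0)·exp(ζ_i t), b_j(t) = b_j(0)·exp(ζ_j t). Then for every t ∈ ℝ the quantity e^{−αt} times the double integral of e^{α t_2}·(b_i(t_1)b_j(t_2) − b_i(t_2)b_j(t_1)) over the region {(t_1,t_2) ∈ ℝ² : t_1 < t_2 < t} (with respect to Lebesgue measure) converges and equals ((ζ_j − ζ_i)/(ζ_i + ζ_j + α)) · b_i(t) b_j(t) / (ζ_i ζ_j). -/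
open Real MeasureTheory Set

lemma aux_indicator_comp {c : ℝ} (a : ℝ) (hc : 0 < c) :
    (fun x => ((Iic (c * a)).indicator Real.exp) (c * x))
      = (Iic a).indicator (fun x => Real.exp (c * x)) := by
  funext x
  simp only [Set.indicator_apply, mem_Iic, mul_le_mul_iff_right₀ hc]

lemma aux_integrableOn_exp_mul_Iic {c : ℝ} (hc : 0 < c) (a : ℝ) :
    IntegrableOn (fun x => Real.exp (c * x)) (Iic a) := by
  have h1 : Integrable ((Iic (c * a)).indicator Real.exp) :=
    (integrable_indicator_iff measurableSet_Iic).2 (integrableOn_exp_Iic _)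
  have h2 := (integrable_comp_mul_left_iff ((Iic (c * a)).indicator Real.exp) hc.ne').2 h1
  rw [aux_indicator_comp a hc] at h2
  exact (integrable_indicator_iff measurableSet_Iic).1 h2

lemma aux_integral_exp_mul_Iic {c : ℝ} (hc : 0 < c) (a : ℝ) :
    (∫ x in Iic a, Real.exp (c * x)) = Real.exp (c * a) / c := by
  rw [← integral_indicator measurableSet_Iic, ← aux_indicator_comp a hc,
    Measure.integral_comp_mul_left ((Iic (c * a)).indicator Real.exp) c,
    integral_indicator measurableSet_Iic, integral_exp_Iic, smul_eq_mul,
    abs_of_pos (inv_pos.2 hc)]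
  ring

theorem double_integral_pfaffian_entry_generalized
    (ζi ζj bi0 bj0 α : ℝ) (hζi : 0 < ζi) (hζj : 0 < ζj)
    (hbi : 0 < bi0) (hbj : 0 < bj0) (hα : 0 ≤ α) (t : ℝ) :
    IntegrableOn
      (fun p : ℝ × ℝ =>
        Real.exp (α * p.2) *
          (bi0 * Real.exp (ζi * p.1) * (bj0 * Real.exp (ζj * p.2)) -
            bi0 * Real.exp (ζi * p.2) * (bj0 * Real.exp (ζj * p.1))))
      {p : ℝ × ℝ | p.1 < p.2 ∧ p.2 < t} volume ∧
    Real.exp (-(α * t)) *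
        ∫ p in {p : ℝ × ℝ | p.1 < p.2 ∧ p.2 < t},
          Real.exp (α * p.2) *
            (bi0 * Real.exp (ζi * p.1) * (bj0 * Real.exp (ζj * p.2)) -
              bi0 * Real.exp (ζi * p.2) * (bj0 * Real.exp (ζj * p.1)))
      = (ζj - ζi) / (ζi + ζj + α) *
          (bi0 * Real.exp (ζi * t) * (bj0 * Real.exp (ζj * t))) / (ζi * ζj) := by
  have hc : 0 < ζi + ζj + α := by linarith
  set c : ℝ := ζi + ζj + α with hcdef
  set F : ℝ × ℝ → ℝ := fun p =>
    Real.exp (α * p.2) *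
      (bi0 * Real.exp (ζi * p.1) * (bj0 * Real.exp (ζj * p.2)) -
        bi0 * Real.exp (ζi * p.2) * (bj0 * Real.exp (ζj * p.1))) with hFdef
  set s : Set (ℝ × ℝ) := {p : ℝ × ℝ | p.1 < p.2 ∧ p.2 < t} with hsdef
  have hs : MeasurableSet s := by
    have hseq : s = {p : ℝ × ℝ | p.1 < p.2} ∩ {p : ℝ × ℝ | p.2 < t} := by
      ext p; simp [hsdef]
    rw [hseq]
    exact (measurableSet_lt measurable_fst measurable_snd).inter
      (measurableSet_lt measurable_snd measurable_const)
  have hFc : Continuous F := by fun_prop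
  -- coefficients
  set A : ℝ → ℝ := fun y => Real.exp (α * y) * (bj0 * Real.exp (ζj * y)) * bi0 with hAdef
  set B : ℝ → ℝ := fun y => Real.exp (α * y) * (bi0 * Real.exp (ζi * y)) * bj0 with hBdef
  have hApos : ∀ y, 0 < A y := fun y => by simp only [hAdef]; positivity
  have hBpos : ∀ y, 0 < B y := fun y => by simp only [hBdef]; positivity
  have hsec_eq : ∀ y : ℝ, (fun x => F (x, y))
      = fun x => A y * Real.exp (ζi * x) - B y * Real.exp (ζj * x) := by
    intro y; funext x; simp only [hFdef, hAdef, hBdef]; ring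
  have hIic : ∀ y : ℝ, IntegrableOn (fun x => F (x, y)) (Iic y) := by
    intro y
    rw [hsec_eq]
    exact ((aux_integrableOn_exp_mul_Iic hζi y).const_mul _).sub
      ((aux_integrableOn_exp_mul_Iic hζj y).const_mul _)
  have hsecInt : ∀ y : ℝ, IntegrableOn (fun x => F (x, y)) (Iio y) :=
    fun y => (hIic y).mono_set Iio_subset_Iic_self
  have hinner : ∀ y : ℝ, (∫ x in Iio y, F (x, y))
      = bi0 * bj0 * (1 / ζi - 1 / ζj) * Real.exp (c * y) := by
    intro y
    rw [setIntegral_congr_set Iio_ae_eq_Iic, hsec_eq,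
      integral_sub ((aux_integrableOn_exp_mul_Iic hζi y).const_mul _)
        ((aux_integrableOn_exp_mul_Iic hζj y).const_mul _),
      integral_const_mul, integral_const_mul,
      aux_integral_exp_mul_Iic hζi, aux_integral_exp_mul_Iic hζj]
    have he : Real.exp (c * y) = Real.exp (α * y) * (Real.exp (ζi * y) * Real.exp (ζj * y)) := by
      rw [← Real.exp_add, ← Real.exp_add, hcdef]; ring_nf
    rw [he]
    simp only [hAdef, hBdef]
    field_simp
  -- sections of the indicator
  have hsecind : ∀ y : ℝ, y < t → ∀ x : ℝ,
      s.indicator F (x, y) = (Iio y).indicator (fun x => F (x, y)) x := by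
    intro y hy x
    by_cases hx : x < y
    · rw [Set.indicator_of_mem (show (x, y) ∈ s from ⟨hx, hy⟩),
        Set.indicator_of_mem (show x ∈ Iio y from hx)]
    · rw [Set.indicator_of_notMem (show (x, y) ∉ s from fun h => hx h.1),
        Set.indicator_of_notMem (show x ∉ Iio y from hx)]
  have hsecind' : ∀ y : ℝ, ¬ y < t → ∀ x : ℝ, s.indicator F (x, y) = 0 := by
    intro y hy x
    exact Set.indicator_of_notMem (show (x, y) ∉ s from fun h => hy h.2) _
  have hsecint2 : ∀ y : ℝ, Integrable (fun x => s.indicator F (x, y)) volume := by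
    intro y
    by_cases hy : y < t
    · simp only [hsecind y hy]
      exact (integrable_indicator_iff measurableSet_Iio).2 (hsecInt y)
    · simp only [hsecind' y hy]; exact integrable_zero _ _ _
  have hfm : AEStronglyMeasurable (s.indicator F) ((volume : Measure ℝ).prod volume) := by
    rw [← Measure.volume_eq_prod]
    exact hFc.aestronglyMeasurable.indicator hs
  -- bound on the integral of the norm of sections
  have hboundInt : Integrable ((Iic t).indicator
      (fun y => bi0 * bj0 * (1 / ζi + 1 / ζj) * Real.exp (c * y))) volume :=
    (integrable_indicator_iff measurableSet_Iic).2
      ((aux_integrableOn_exp_mul_Iic hc t).const_mul _)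
  have hnormval : ∀ y : ℝ, (∫ x, ‖s.indicator F (x, y)‖)
      ≤ (Iic t).indicator (fun y => bi0 * bj0 * (1 / ζi + 1 / ζj) * Real.exp (c * y)) y := by
    intro y
    by_cases hy : y < t
    · simp only [hsecind y hy]
      rw [Set.indicator_of_mem (show y ∈ Iic t from le_of_lt hy)]
      have hstep : ∀ x : ℝ, ‖(Iio y).indicator (fun x => F (x, y)) x‖
          = (Iio y).indicator (fun x => ‖F (x, y)‖) x := by
        intro x; exact norm_indicator_eq_indicator_norm _ _
      simp only [hstep]
      rw [integral_indicator measurableSet_Iio,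
        setIntegral_congr_set Iio_ae_eq_Iic]
      have hInt1 : IntegrableOn (fun x => ‖F (x, y)‖) (Iic y) := (hIic y).norm
      have hInt2 : IntegrableOn
          (fun x => A y * Real.exp (ζi * x) + B y * Real.exp (ζj * x)) (Iic y) :=
        ((aux_integrableOn_exp_mul_Iic hζi y).const_mul _).add
          ((aux_integrableOn_exp_mul_Iic hζj y).const_mul _)
      have hle : (∫ x in Iic y, ‖F (x, y)‖)
          ≤ ∫ x in Iic y, (A y * Real.exp (ζi * x) + B y * Real.exp (ζj * x)) := by
        refine setIntegral_mono hInt1 hInt2 (fun x => ?_)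
        have : F (x, y) = A y * Real.exp (ζi * x) - B y * Real.exp (ζj * x) := by
          have := hsec_eq y
          exact congrFun this x
        rw [this, Real.norm_eq_abs]
        calc |A y * Real.exp (ζi * x) - B y * Real.exp (ζj * x)|
            ≤ |A y * Real.exp (ζi * x)| + |B y * Real.exp (ζj * x)| := abs_sub _ _
          _ = A y * Real.exp (ζi * x) + B y * Real.exp (ζj * x) := by
              rw [abs_of_pos (by have := hApos y; positivity),
                abs_of_pos (by have := hBpos y; positivity)]
      refine hle.trans (le_of_eq ?_)
      rw [integral_add ((aux_integrableOn_exp_mul_Iic hζi y).const_mul _)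
          ((aux_integrableOn_exp_mul_Iic hζj y).const_mul _),
        integral_const_mul, integral_const_mul,
        aux_integral_exp_mul_Iic hζi, aux_integral_exp_mul_Iic hζj]
      have he : Real.exp (c * y) = Real.exp (α * y) * (Real.exp (ζi * y) * Real.exp (ζj * y)) := by
        rw [← Real.exp_add, ← Real.exp_add, hcdef]; ring_nf
      rw [he]
      simp only [hAdef, hBdef]
      field_simp
    · simp only [hsecind' y hy]
      simp only [norm_zero, integral_zero]
      exact Set.indicator_nonneg (fun z _ => by positivity) y
  have hgmeas : AEStronglyMeasurable (fun y => ∫ x, ‖s.indicator F (x, y)‖) volume := by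
    have h1 : AEStronglyMeasurable (fun z : ℝ × ℝ => ‖s.indicator F z.swap‖)
        ((volume : Measure ℝ).prod volume) := hfm.norm.prod_swap
    exact h1.integral_prod_right'
  have hg : Integrable (fun y => ∫ x, ‖s.indicator F (x, y)‖) volume := by
    refine hboundInt.mono' hgmeas (ae_of_all _ fun y => ?_)
    rw [Real.norm_eq_abs, abs_of_nonneg (integral_nonneg fun x => norm_nonneg _)]
    exact hnormval y
  have hint : Integrable (s.indicator F) ((volume : Measure ℝ).prod volume) :=
    (integrable_prod_iff' hfm).2 ⟨ae_of_all _ hsecint2, hg⟩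
  have hint' : Integrable (s.indicator F) (volume : Measure (ℝ × ℝ)) := by
    rw [Measure.volume_eq_prod]; exact hint
  constructor
  · exact (integrable_indicator_iff hs).1 hint'
  · have hval : (∫ p in s, F p)
        = bi0 * bj0 * (1 / ζi - 1 / ζj) * (Real.exp (c * t) / c) := by
      rw [← integral_indicator hs, Measure.volume_eq_prod, integral_prod_symm _ hint]
      have h1 : ∀ y : ℝ, (∫ x, s.indicator F (x, y))
          = (Iio t).indicator (fun y => bi0 * bj0 * (1 / ζi - 1 / ζj) * Real.exp (c * y)) y := by
        intro y
        by_cases hy : y < t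
        · simp only [hsecind y hy]
          rw [integral_indicator measurableSet_Iio, hinner y,
            Set.indicator_of_mem (show y ∈ Iio t from hy)]
        · simp only [hsecind' y hy]
          rw [Set.indicator_of_notMem (show y ∉ Iio t from hy)]
          simp
      simp_rw [h1]
      rw [integral_indicator measurableSet_Iio, setIntegral_congr_set Iio_ae_eq_Iic,
        integral_const_mul, aux_integral_exp_mul_Iic hc t]
    rw [hval]
    have he : Real.exp (c * t) = Real.exp (α * t) * (Real.exp (ζi * t) * Real.exp (ζj * t)) := by
      rw [← Real.exp_add, ← Real.exp_add, hcdef]; ring_nf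
    rw [he, Real.exp_neg]
    have h1 : Real.exp (α * t) ≠ 0 := Real.exp_ne_zero _
    field_simp
end

section
/- With the data below, for every integer k with 0 ≤ k ≤ n and every t ∈ ℝ, the following two identities hold: Σ_{j=1}^{k} W_{j−1}(t) / (U_j(t) U_{j−1}(t)) = V_{k−1}(t) / U_k(t), and Σ_{j=k+1}^{n} Z_j(t) / (U_j(t) U_{j−1}(t)) = T_{k+1}(t) / U_k(t). -/
open Finset Real

def idxSets (n : ℕ) (k : ℤ) : Finset (Finset (Fin n)) :=
  (Finset.univ : Finset (Fin n)).powerset.filter (fun J => (J.card : ℤ) = k)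

noncomputable def Del {n : ℕ} (ζ : Fin n → ℝ) (J : Finset (Fin n)) : ℝ :=
  ∏ i ∈ J, ∏ j ∈ J.filter (fun j => i < j), (ζ j - ζ i)

noncomputable def Gam {n : ℕ} (ζ : Fin n → ℝ) (J : Finset (Fin n)) : ℝ :=
  ∏ i ∈ J, ∏ j ∈ J.filter (fun j => i < j), (ζ j + ζ i)

noncomputable def Tf {n : ℕ} (ζ b0 : Fin n → ℝ) (k : ℤ) (t : ℝ) : ℝ :=
  ∑ J ∈ idxSets n k,
    (Del ζ J) ^ 2 / ((∏ j ∈ J, ζ j) * Gam ζ J) * ∏ j ∈ J, b0 j * Real.exp (t / ζ j)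

noncomputable def Uf {n : ℕ} (ζ b0 : Fin n → ℝ) (k : ℤ) (t : ℝ) : ℝ :=
  ∑ J ∈ idxSets n k,
    (Del ζ J) ^ 2 / Gam ζ J * ∏ j ∈ J, b0 j * Real.exp (t / ζ j)

noncomputable def Vf {n : ℕ} (ζ b0 : Fin n → ℝ) (k : ℤ) (t : ℝ) : ℝ :=
  ∑ J ∈ idxSets n k,
    (Del ζ J) ^ 2 / Gam ζ J * (∏ j ∈ J, ζ j) * ∏ j ∈ J, b0 j * Real.exp (t / ζ j)

noncomputable def Wf {n : ℕ} (ζ b0 : Fin n → ℝ) (k : ℤ) (t : ℝ) : ℝ :=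
  Vf ζ b0 k t * Uf ζ b0 k t - Vf ζ b0 (k - 1) t * Uf ζ b0 (k + 1) t

noncomputable def Zf {n : ℕ} (ζ b0 : Fin n → ℝ) (k : ℤ) (t : ℝ) : ℝ :=
  Tf ζ b0 k t * Uf ζ b0 k t - Tf ζ b0 (k + 1) t * Uf ζ b0 (k - 1) t


lemma Del_pos {n : ℕ} {ζ : Fin n → ℝ} (hζmono : StrictMono ζ) (J : Finset (Fin n)) :
    0 < Del ζ J := by
  unfold Del
  apply Finset.prod_pos
  intro i _
  apply Finset.prod_pos
  intro j hj
  have hij : i < j := (Finset.mem_filter.mp hj).2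
  have := hζmono hij
  linarith

lemma Gam_pos {n : ℕ} {ζ : Fin n → ℝ} (hζpos : ∀ j, 0 < ζ j) (J : Finset (Fin n)) :
    0 < Gam ζ J := by
  unfold Gam
  apply Finset.prod_pos
  intro i _
  apply Finset.prod_pos
  intro j _
  have := hζpos i; have := hζpos j; linarith

lemma Uf_pos {n : ℕ} {ζ b0 : Fin n → ℝ} (hζpos : ∀ j, 0 < ζ j) (hζmono : StrictMono ζ)
    (hb : ∀ j, 0 < b0 j) {j : ℕ} (hj : j ≤ n) (t : ℝ) : 0 < Uf ζ b0 (j : ℤ) t := by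
  unfold Uf
  apply Finset.sum_pos
  · intro J _
    have h1 := Del_pos hζmono (ζ := ζ) J
    have h2 := Gam_pos hζpos (ζ := ζ) J
    have h3 : 0 < ∏ i ∈ J, b0 i * Real.exp (t / ζ i) :=
      Finset.prod_pos fun i _ => mul_pos (hb i) (Real.exp_pos _)
    positivity
  · obtain ⟨J, -, hcard⟩ := Finset.exists_subset_card_eq (s := (Finset.univ : Finset (Fin n)))
      (show j ≤ (Finset.univ : Finset (Fin n)).card by simpa using hj)
    exact ⟨J, by simp [idxSets, hcard]⟩

lemma idxSets_neg_one (n : ℕ) : idxSets n (-1) = ∅ := by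
  ext J
  simp only [idxSets, Finset.mem_filter, Finset.mem_powerset, Finset.notMem_empty, iff_false,
    not_and]
  intro _
  omega

lemma idxSets_big (n : ℕ) : idxSets n ((n : ℤ) + 1) = ∅ := by
  ext J
  simp only [idxSets, Finset.mem_filter, Finset.mem_powerset, Finset.notMem_empty, iff_false,
    not_and]
  intro _
  have := Finset.card_le_univ J
  simp only [Finset.card_univ, Fintype.card_fin] at this
  omega

lemma Vf_neg_one {n : ℕ} (ζ b0 : Fin n → ℝ) (t : ℝ) : Vf ζ b0 (-1) t = 0 := by
  simp [Vf, idxSets_neg_one]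

lemma Tf_big {n : ℕ} (ζ b0 : Fin n → ℝ) (t : ℝ) : Tf ζ b0 ((n : ℤ) + 1) t = 0 := by
  simp [Tf, idxSets_big]

theorem sum_WZ_identities {n : ℕ} (hn : 1 ≤ n) (ζ b0 : Fin n → ℝ)
    (hζpos : ∀ j, 0 < ζ j) (hζmono : StrictMono ζ) (hb : ∀ j, 0 < b0 j)
    (k : ℕ) (hk : k ≤ n) (t : ℝ) :
    (∑ j ∈ Finset.range k, Wf ζ b0 (j : ℤ) t / (Uf ζ b0 ((j : ℤ) + 1) t * Uf ζ b0 (j : ℤ) t))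
        = Vf ζ b0 ((k : ℤ) - 1) t / Uf ζ b0 (k : ℤ) t ∧
    (∑ j ∈ Finset.Icc (k + 1) n, Zf ζ b0 (j : ℤ) t / (Uf ζ b0 (j : ℤ) t * Uf ζ b0 ((j : ℤ) - 1) t))
        = Tf ζ b0 ((k : ℤ) + 1) t / Uf ζ b0 (k : ℤ) t := by
  have hU : ∀ j : ℕ, j ≤ n → Uf ζ b0 (j : ℤ) t ≠ 0 :=
    fun j hj => (Uf_pos hζpos hζmono hb hj t).ne'
  constructor
  · have step : ∀ j ∈ Finset.range k,
        Wf ζ b0 (j : ℤ) t / (Uf ζ b0 ((j : ℤ) + 1) t * Uf ζ b0 (j : ℤ) t)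
          = (fun m : ℕ => Vf ζ b0 ((m : ℤ) - 1) t / Uf ζ b0 (m : ℤ) t) (j + 1)
            - (fun m : ℕ => Vf ζ b0 ((m : ℤ) - 1) t / Uf ζ b0 (m : ℤ) t) j := by
      intro j hj
      have hj' : j < k := Finset.mem_range.mp hj
      have h1 := hU j (by omega)
      have h2 := hU (j + 1) (by omega)
      push_cast at h2 ⊢
      have e1 : ((j : ℤ) + 1 - 1) = (j : ℤ) := by ring
      rw [e1]
      unfold Wf
      field_simp
    rw [Finset.sum_congr rfl step,
      Finset.sum_range_sub (f := fun m : ℕ => Vf ζ b0 ((m : ℤ) - 1) t / Uf ζ b0 (m : ℤ) t)]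
    simp [Vf_neg_one]
  · have hrw : ∑ j ∈ Finset.Icc (k + 1) n,
        Zf ζ b0 (j : ℤ) t / (Uf ζ b0 (j : ℤ) t * Uf ζ b0 ((j : ℤ) - 1) t)
        = ∑ i ∈ Finset.range (n - k),
          Zf ζ b0 ((k + 1 + i : ℕ) : ℤ) t /
            (Uf ζ b0 ((k + 1 + i : ℕ) : ℤ) t * Uf ζ b0 (((k + 1 + i : ℕ) : ℤ) - 1) t) := by
      rw [show Finset.Icc (k + 1) n = Finset.Ico (k + 1) (n + 1) by
        rw [Finset.Ico_add_one_right_eq_Icc]]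
      rw [Finset.sum_Ico_eq_sum_range]
      have : n + 1 - (k + 1) = n - k := by omega
      rw [this]
    rw [hrw]
    have step : ∀ i ∈ Finset.range (n - k),
        Zf ζ b0 ((k + 1 + i : ℕ) : ℤ) t /
            (Uf ζ b0 ((k + 1 + i : ℕ) : ℤ) t * Uf ζ b0 (((k + 1 + i : ℕ) : ℤ) - 1) t)
          = (fun m : ℕ => Tf ζ b0 (((k + m : ℕ) : ℤ) + 1) t / Uf ζ b0 ((k + m : ℕ) : ℤ) t) i
            - (fun m : ℕ => Tf ζ b0 (((k + m : ℕ) : ℤ) + 1) t / Uf ζ b0 ((k + m : ℕ) : ℤ) t)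
              (i + 1) := by
      intro i hi
      have hi' : i < n - k := Finset.mem_range.mp hi
      have h1 := hU (k + i) (by omega)
      have h2 := hU (k + i + 1) (by omega)
      push_cast at h1 h2 ⊢
      have h2' : Uf ζ b0 ((k : ℤ) + 1 + i) t ≠ 0 := by
        rw [show ((k : ℤ) + 1 + i) = ((k : ℤ) + i + 1) by ring]; exact h2
      have e1 : ((k : ℤ) + 1 + i - 1) = (k : ℤ) + i := by ring
      have e2 : ((k : ℤ) + (i + 1)) = (k : ℤ) + 1 + i := by ring
      rw [e1, e2]
      unfold Zf
      have e3 : ((k : ℤ) + 1 + i - 1) = (k : ℤ) + i := by ring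
      rw [e3]
      field_simp [h1, h2']
      ring
    rw [Finset.sum_congr rfl step,
      Finset.sum_range_sub' (f := fun m : ℕ => Tf ζ b0 (((k + m : ℕ) : ℤ) + 1) t / Uf ζ b0 ((k + m : ℕ) : ℤ) t)]
    have e4 : k + (n - k) = n := by omega
    rw [e4]
    simp [Tf_big]
end
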